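/- Let n, k be positive integers and let S = {(x_0,…,x_{nk}) ∈ ℝ^{nk+1} : 0 < x_0 < ⋯ < x_{nk} < n, no x_i ∈ ℤ}. For x ∈ S and integer m, let m+x denote the increasing rearrangement of (x_i + m mod n). Then S is, up to a null set, the disjoint union of the n sets {x ∈ S : m + x ∈ V_{k,n}} for m = 0, 1, …, n−1, where V_{k,n} = {x ∈ S : x_{jk} < j for j = 1,…,n}; consequently vol V_{k,n} = (1/n) · n^{nk+1}/(nk+1)! = n^{nk}/(nk+1)!. -/

import Mathlib

open Nat MeasureTheory

/-- `realMod t n` is the representative of `t` modulo `n` lying in `[0,n)`. -/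
noncomputable def realMod (t : ℝ) (n : ℕ) : ℝ := t - n * ⌊t / (n : ℝ)⌋

/-- The set of strictly increasing tuples in `(0,n)` avoiding the integers. -/
def Sset (n k : ℕ) : Set (Fin (n * k + 1) → ℝ) :=
  {x | (∀ i j : Fin (n * k + 1), i < j → x i < x j) ∧
    ∀ i : Fin (n * k + 1), 0 < x i ∧ x i < n ∧ ∀ z : ℤ, x i ≠ (z : ℝ)}

/-- The set `V_{k,n}`. -/
def Vset (n k : ℕ) : Set (Fin (n * k + 1) → ℝ) :=
  {x | x ∈ Sset n k ∧
    ∀ i : Fin (n * k + 1), ∀ j : ℕ, 1 ≤ j → j ≤ n → (i : ℕ) = j * k → x i < j}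


open Finset Function
open Fin.NatCast

namespace Aux15


variable {N : ℕ}

/-- number of coordinates `< t` -/
noncomputable def cnt (x : Fin N → ℝ) (t : ℝ) : ℕ := (Finset.univ.filter fun i => x i < t).card

/-- number of coordinates in the open interval `(j, j+1)` -/
noncomputable def icnt (x : Fin N → ℝ) (j : ℕ) : ℕ :=
  (Finset.univ.filter fun i => (j : ℝ) < x i ∧ x i < (j : ℝ) + 1).card

lemma cnt_lt_iff {x : Fin N → ℝ} (hx : StrictMono x) (p : Fin N) (t : ℝ) :
    x p < t ↔ (p : ℕ) + 1 ≤ cnt x t := by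
  constructor
  · intro h
    have hsub : Finset.Iic p ⊆ Finset.univ.filter fun i => x i < t := by
      intro i hi
      rw [Finset.mem_Iic] at hi
      exact Finset.mem_filter.2 ⟨Finset.mem_univ _, lt_of_le_of_lt (hx.monotone hi) h⟩
    have := Finset.card_le_card hsub
    rwa [Fin.card_Iic] at this
  · intro h
    by_contra hc
    push_neg at hc
    have hsub : (Finset.univ.filter fun i => x i < t) ⊆ Finset.Iio p := by
      intro i hi
      rw [Finset.mem_filter] at hi
      rw [Finset.mem_Iio]
      by_contra hip
      push_neg at hip
      exact absurd (lt_of_lt_of_le hi.2 (hc.trans (hx.monotone hip))) (lt_irrefl _)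
    have := Finset.card_le_card hsub
    rw [Fin.card_Iio] at this
    unfold cnt at h
    omega

/-- number of coordinates `> t` -/
noncomputable def cntGT (x : Fin N → ℝ) (t : ℝ) : ℕ := (Finset.univ.filter fun i => t < x i).card

lemma cnt_add_cntGT {x : Fin N → ℝ} (t : ℝ) (hne : ∀ i, x i ≠ t) :
    cnt x t + cntGT x t = N := by
  unfold cnt cntGT
  have : (Finset.univ.filter fun i => t < x i) = Finset.univ.filter fun i => ¬ (x i < t) := by
    apply Finset.filter_congr
    intro i _
    simp only [eq_iff_iff, not_lt]
    constructor
    · intro h; exact h.le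
    · intro h; exact lt_of_le_of_ne h (Ne.symm (hne i))
  rw [this, Finset.card_filter_add_card_filter_not, Finset.card_univ, Fintype.card_fin]

lemma gt_iff {x : Fin N → ℝ} (hx : StrictMono x) (hne : ∀ i, x i ≠ t) (p : Fin N) :
    t < x p ↔ N - cntGT x t ≤ (p : ℕ) := by
  have h1 := cnt_add_cntGT t hne
  have h2 := cnt_lt_iff hx p t
  have h3 : t < x p ↔ ¬ (x p < t) := by
    constructor
    · intro h; exact not_lt.2 h.le
    · intro h; exact lt_of_le_of_ne (not_lt.1 h) (Ne.symm (hne p))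
  have h4 : (p : ℕ) < N := p.isLt
  rw [h3, h2]
  omega

lemma cnt_nat_eq_sum {x : Fin N → ℝ} (hpos : ∀ i, 0 < x i)
    (hnint : ∀ i, ∀ z : ℤ, x i ≠ (z : ℝ)) (t : ℕ) :
    cnt x t = ∑ j ∈ Finset.range t, icnt x j := by
  induction t with
  | zero =>
    simp only [Finset.range_zero, Finset.sum_empty, cnt]
    rw [Finset.card_eq_zero, Finset.filter_eq_empty_iff]
    intro i _
    push_neg
    exact le_of_lt (by exact_mod_cast hpos i)
  | succ t ih =>
    rw [Finset.sum_range_succ, ← ih]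
    unfold cnt icnt
    rw [← Finset.card_union_of_disjoint]
    · congr 1
      ext i
      simp only [Finset.mem_union, Finset.mem_filter, Finset.mem_univ, true_and]
      have hne : x i ≠ (t : ℝ) := by
        have := hnint i t
        simpa using this
      push_cast
      constructor
      · intro h
        rcases lt_or_gt_of_ne hne with h' | h'
        · exact Or.inl h'
        · exact Or.inr ⟨h', h⟩
      · rintro (h | ⟨h1, h2⟩)
        · linarith
        · exact h2
    · rw [Finset.disjoint_filter]
      intro i _ h1 h2
      linarith [h2.1]

lemma cnt_all {x : Fin N → ℝ} (t : ℝ) (hlt : ∀ i, x i < t) : cnt x t = N := by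
  unfold cnt
  rw [Finset.filter_true_of_mem (fun i _ => hlt i), Finset.card_univ, Fintype.card_fin]

lemma sum_icnt {x : Fin N → ℝ} {n : ℕ} (hpos : ∀ i, 0 < x i)
    (hnint : ∀ i, ∀ z : ℤ, x i ≠ (z : ℝ)) (hlt : ∀ i, x i < n) :
    ∑ j ∈ Finset.range n, icnt x j = N := by
  rw [← cnt_nat_eq_sum hpos hnint, cnt_all _ hlt]

/-- two strictly monotone tuples with the same range are equal -/
lemma strictMono_unique {y y' : Fin N → ℝ} (hy : StrictMono y) (hy' : StrictMono y')
    (h : Set.range y = Set.range y') : y = y' := by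
  let e : Fin N ≃ Set.range y' :=
    (Equiv.ofInjective y hy.injective).trans (Equiv.setCongr h)
  let e' : Fin N ≃ Set.range y' := Equiv.ofInjective y' hy'.injective
  let σ : Equiv.Perm (Fin N) := e.trans e'.symm
  have hσ : ∀ i, y' (σ i) = y i := by
    intro i
    have : (e' (σ i) : ℝ) = (e i : ℝ) := by
      simp only [σ, Equiv.trans_apply, Equiv.apply_symm_apply]
    simpa [e', e, Equiv.ofInjective] using this
  have hmono : Monotone (y' ∘ σ) := by
    intro a b hab
    simp only [Function.comp_apply, hσ]
    exact hy.monotone hab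
  have := Tuple.unique_monotone (f := y') (σ := σ) (τ := Equiv.refl _) hmono
    (by simpa using hy'.monotone)
  funext i
  have h2 := congrFun this i
  simp only [Function.comp_apply, Equiv.refl_apply, hσ] at h2
  exact h2

lemma card_filter_congr_of_range_eq {y w : Fin N → ℝ} (hy : Injective y) (hw : Injective w)
    (h : Set.range y = Set.range w) (p : ℝ → Prop) [DecidablePred p] :
    (Finset.univ.filter fun i => p (y i)).card = (Finset.univ.filter fun i => p (w i)).card := by
  have himg : Finset.univ.image y = Finset.univ.image w := by
    apply Finset.coe_injective
    simp [Set.image_univ, h]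
  have h1 : ((Finset.univ.image y).filter p).card = (Finset.univ.filter fun i => p (y i)).card := by
    rw [Finset.filter_image, Finset.card_image_of_injective _ hy]
  have h2 : ((Finset.univ.image w).filter p).card = (Finset.univ.filter fun i => p (w i)).card := by
    rw [Finset.filter_image, Finset.card_image_of_injective _ hw]
  rw [← h1, ← h2, himg]

lemma cnt_congr {y w : Fin N → ℝ} (hy : Injective y) (hw : Injective w)
    (h : Set.range y = Set.range w) (t : ℝ) : cnt y t = cnt w t :=
  card_filter_congr_of_range_eq hy hw h (fun v => v < t)

lemma icnt_congr {y w : Fin N → ℝ} (hy : Injective y) (hw : Injective w)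
    (h : Set.range y = Set.range w) (j : ℕ) : icnt y j = icnt w j :=
  card_filter_congr_of_range_eq hy hw h (fun v => (j : ℝ) < v ∧ v < (j : ℝ) + 1)

lemma realMod_eq_self {t : ℝ} {n : ℕ} (hn : 0 < n) (h0 : 0 ≤ t) (h1 : t < n) :
    realMod t n = t := by
  have hn' : (0 : ℝ) < n := by exact_mod_cast hn
  have : ⌊t / (n : ℝ)⌋ = 0 := by
    rw [Int.floor_eq_zero_iff]
    constructor
    · exact div_nonneg h0 hn'.le
    · rw [div_lt_one hn']; exact h1
  simp [realMod, this]

lemma realMod_eq_sub {t : ℝ} {n : ℕ} (hn : 0 < n) (h0 : (n : ℝ) ≤ t) (h1 : t < 2 * n) :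
    realMod t n = t - n := by
  have hn' : (0 : ℝ) < n := by exact_mod_cast hn
  have : ⌊t / (n : ℝ)⌋ = 1 := by
    rw [Int.floor_eq_iff]
    constructor
    · push_cast
      rw [le_div_iff₀ hn']; linarith
    · push_cast
      rw [div_lt_iff₀ hn']; linarith
  simp [realMod, this]


section Shift

variable {n k : ℕ}

lemma strictMono_of_mem {x : Fin (n*k+1) → ℝ} (hx : x ∈ Sset n k) : StrictMono x :=
  fun i j h => hx.1 i j h

lemma mem_V_iff (hn : 0 < n) {x : Fin (n*k+1) → ℝ} (hx : x ∈ Sset n k) :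
    x ∈ Vset n k ↔ ∀ t : ℕ, 1 ≤ t → t ≤ n → t * k + 1 ≤ cnt x t := by
  constructor
  · intro hv t h1 h2
    have hb : t * k < n * k + 1 := by
      have : t * k ≤ n * k := Nat.mul_le_mul_right k h2
      omega
    have h3 := hv.2 ⟨t * k, hb⟩ t h1 h2 rfl
    have h4 := (cnt_lt_iff (strictMono_of_mem hx) ⟨t*k, hb⟩ t).1 h3
    simpa using h4
  · intro h
    refine ⟨hx, ?_⟩
    intro i j h1 h2 hij
    have hc := h j h1 h2
    apply (cnt_lt_iff (strictMono_of_mem hx) i (j : ℝ)).2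
    rw [hij]
    exact hc

/-- the shifted tuple before sorting -/
noncomputable def wfun (n m : ℕ) {N : ℕ} (x : Fin N → ℝ) : Fin N → ℝ :=
  fun i => realMod (x i + m) n

variable {N : ℕ} {m : ℕ} {x : Fin N → ℝ}

lemma w_spec (hn : 0 < n) (hm : m < n) (hpos : ∀ i, 0 < x i) (hlt : ∀ i, x i < n)
    (hni : ∀ i, ∀ z : ℤ, x i ≠ (z : ℝ)) (i : Fin N) :
    (x i < (n : ℝ) - m ∧ wfun n m x i = x i + m) ∨
      ((n : ℝ) - m < x i ∧ wfun n m x i = x i + m - n) := by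
  have hm' : (m : ℝ) < n := by exact_mod_cast hm
  have hne : x i ≠ (n : ℝ) - m := by
    have := hni i ((n : ℤ) - m)
    intro hc
    apply this
    rw [hc]; push_cast; ring
  rcases lt_or_gt_of_ne hne with h | h
  · left
    refine ⟨h, ?_⟩
    unfold wfun
    rw [realMod_eq_self hn (by linarith [hpos i, (Nat.cast_nonneg m : (0:ℝ) ≤ m)]) (by linarith)]
  · right
    refine ⟨h, ?_⟩
    unfold wfun
    rw [realMod_eq_sub hn (by linarith) (by linarith [hlt i])]

lemma w_pos (hn : 0 < n) (hm : m < n) (hpos : ∀ i, 0 < x i) (hlt : ∀ i, x i < n)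
    (hni : ∀ i, ∀ z : ℤ, x i ≠ (z : ℝ)) (i : Fin N) : 0 < wfun n m x i := by
  rcases w_spec hn hm hpos hlt hni i with ⟨h1, h2⟩ | ⟨h1, h2⟩ <;> rw [h2]
  · have := hpos i
    have : (0:ℝ) ≤ m := Nat.cast_nonneg m
    linarith [hpos i]
  · linarith

lemma w_lt (hn : 0 < n) (hm : m < n) (hpos : ∀ i, 0 < x i) (hlt : ∀ i, x i < n)
    (hni : ∀ i, ∀ z : ℤ, x i ≠ (z : ℝ)) (i : Fin N) : wfun n m x i < n := by
  have hm' : (m : ℝ) < n := by exact_mod_cast hm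
  rcases w_spec hn hm hpos hlt hni i with ⟨h1, h2⟩ | ⟨h1, h2⟩ <;> rw [h2]
  · linarith
  · linarith [hlt i]

lemma w_nonint (hn : 0 < n) (hm : m < n) (hpos : ∀ i, 0 < x i) (hlt : ∀ i, x i < n)
    (hni : ∀ i, ∀ z : ℤ, x i ≠ (z : ℝ)) (i : Fin N) (z : ℤ) : wfun n m x i ≠ (z : ℝ) := by
  rcases w_spec hn hm hpos hlt hni i with ⟨h1, h2⟩ | ⟨h1, h2⟩ <;> rw [h2] <;> intro hc
  · apply hni i (z - m)
    push_cast
    linarith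
  · apply hni i (z - m + n)
    push_cast
    linarith

lemma w_inj (hn : 0 < n) (hm : m < n) (hx : StrictMono x) (hpos : ∀ i, 0 < x i)
    (hlt : ∀ i, x i < n) (hni : ∀ i, ∀ z : ℤ, x i ≠ (z : ℝ)) :
    Function.Injective (wfun n m x) := by
  intro i j hij
  by_contra hne
  have hxne : x i ≠ x j := fun hc => hne (hx.injective hc)
  rcases w_spec hn hm hpos hlt hni i with ⟨h1, h2⟩ | ⟨h1, h2⟩ <;>
    rcases w_spec hn hm hpos hlt hni j with ⟨h3, h4⟩ | ⟨h3, h4⟩ <;>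
    rw [h2, h4] at hij
  · exact hxne (by linarith)
  · have := hlt j; have := hpos i
    have hn' : (0:ℝ) < n := by exact_mod_cast hn
    linarith
  · have := hlt i; have := hpos j
    have hn' : (0:ℝ) < n := by exact_mod_cast hn
    linarith
  · exact hxne (by linarith)

lemma icnt_w (hn : 0 < n) (hm : m < n) (hx : StrictMono x) (hpos : ∀ i, 0 < x i)
    (hlt : ∀ i, x i < n) (hni : ∀ i, ∀ z : ℤ, x i ≠ (z : ℝ)) {j : ℕ} (hj : j < n) :
    icnt (wfun n m x) j = icnt x ((j + (n - m)) % n) := by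
  unfold icnt
  congr 1
  ext i
  simp only [Finset.mem_filter, Finset.mem_univ, true_and]
  rcases Nat.lt_or_ge j m with hjm | hjm
  · -- j < m : wrapped values land here
    have he : (j + (n - m)) % n = j + n - m := by
      rw [Nat.mod_eq_of_lt (by omega)]
      omega
    rw [he]
    have hcast : ((j + n - m : ℕ) : ℝ) = (j : ℝ) + n - m := by
      push_cast [Nat.cast_sub (by omega : m ≤ j + n)]
      ring
    rw [hcast]
    have hj1 : (j : ℝ) + 1 ≤ m := by exact_mod_cast hjm
    constructor
    · rintro ⟨ha, hb⟩
      rcases w_spec hn hm hpos hlt hni i with ⟨h1, h2⟩ | ⟨h1, h2⟩ <;> rw [h2] at ha hb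
      · exfalso
        have := hpos i
        linarith
      · constructor <;> linarith
    · rintro ⟨ha, hb⟩
      have hwrap : (n : ℝ) - m < x i := by linarith [ (Nat.cast_nonneg j : (0:ℝ) ≤ j) ]
      rcases w_spec hn hm hpos hlt hni i with ⟨h1, h2⟩ | ⟨h1, h2⟩
      · exfalso; linarith
      · rw [h2]; constructor <;> linarith
  · -- m ≤ j : unwrapped values land here
    have he : (j + (n - m)) % n = j - m := by
      rw [show j + (n - m) = (j - m) + n by omega, Nat.add_mod_right,
        Nat.mod_eq_of_lt (by omega)]
    rw [he]
    have hcast : ((j - m : ℕ) : ℝ) = (j : ℝ) - m := by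
      push_cast [Nat.cast_sub hjm]
      ring
    rw [hcast]
    have hj1 : (j : ℝ) + 1 ≤ n := by exact_mod_cast hj
    constructor
    · rintro ⟨ha, hb⟩
      rcases w_spec hn hm hpos hlt hni i with ⟨h1, h2⟩ | ⟨h1, h2⟩ <;> rw [h2] at ha hb
      · constructor <;> linarith
      · exfalso
        have hm' : (m : ℝ) ≤ j := by exact_mod_cast hjm
        linarith [hlt i]
    · rintro ⟨ha, hb⟩
      have hunw : x i < (n : ℝ) - m := by linarith
      rcases w_spec hn hm hpos hlt hni i with ⟨h1, h2⟩ | ⟨h1, h2⟩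
      · rw [h2]; constructor <;> linarith
      · exfalso; linarith

end Shift


lemma window_sum (n : ℕ) (g : ℕ → ℕ) (t : ℕ) :
    ∑ j ∈ Finset.range n, g ((t + j) % n) = ∑ j ∈ Finset.range n, g (j % n) := by
  induction t with
  | zero => simp
  | succ t ih =>
    have h4 : (∑ j ∈ range n, g ((t+(j+1))%n)) + g ((t+0)%n)
        = (∑ j ∈ range n, g ((t+j)%n)) + g ((t+n)%n) := by
      rw [← Finset.sum_range_succ' (fun j => g ((t + j) % n)) n,
        Finset.sum_range_succ (fun j => g ((t + j) % n)) n]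
    rw [Nat.add_mod_right] at h4
    have h5 := Nat.add_right_cancel h4
    have h6 : ∑ j ∈ range n, g ((t+1+j)%n) = ∑ j ∈ range n, g ((t+(j+1))%n) := by
      apply Finset.sum_congr rfl; intro j _
      rw [show t+1+j = t+(j+1) by omega]
    rw [h6, h5, ih]

lemma sum_split (r t : ℕ) (g : ℕ → ℕ) :
    ∑ j ∈ Finset.range (r + t), g j
      = (∑ j ∈ Finset.range r, g j) + ∑ j ∈ Finset.range t, g (r + j) := by
  induction t with
  | zero => simp
  | succ t ih =>
    rw [show r + (t+1) = (r+t)+1 by omega, Finset.sum_range_succ, ih, Finset.sum_range_succ]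
    omega

lemma cycle_lemma (n k : ℕ) (hn : 0 < n) (a : ℕ → ℕ)
    (ha : ∑ j ∈ Finset.range n, a j = n * k + 1) :
    ∃! r : ℕ, r < n ∧ ∀ t : ℕ, 1 ≤ t → t ≤ n →
      t * k + 1 ≤ ∑ j ∈ Finset.range t, a ((j + r) % n) := by
  set f : ℕ → ℤ := fun t => (∑ j ∈ Finset.range t, (a (j % n) : ℤ)) - t * k with hf
  have hper : ∀ t, f (t + n) = f t + 1 := by
    intro t
    have h1 : ∑ j ∈ Finset.range (t + n), (a (j % n) : ℤ)
        = (∑ j ∈ Finset.range t, (a (j % n) : ℤ)) + ∑ j ∈ Finset.range n, (a ((t + j) % n) : ℤ) := by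
      exact_mod_cast sum_split t n (fun j => a (j % n))
    have h2 : ∑ j ∈ Finset.range n, a ((t + j) % n) = n * k + 1 := by
      rw [window_sum]
      rw [← ha]; apply Finset.sum_congr rfl; intro j hj
      rw [Nat.mod_eq_of_lt (Finset.mem_range.1 hj)]
    have h2' : ∑ j ∈ Finset.range n, (a ((t + j) % n) : ℤ) = (n : ℤ) * k + 1 := by
      exact_mod_cast congrArg (Nat.cast : ℕ → ℤ) h2
    simp only [hf, h1, h2']
    push_cast
    ring
  -- condition in terms of f
  have hcond : ∀ r : ℕ, ((∀ t : ℕ, 1 ≤ t → t ≤ n →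
      t * k + 1 ≤ ∑ j ∈ Finset.range t, a ((j + r) % n))
      ↔ (∀ t : ℕ, 1 ≤ t → t ≤ n → f r + 1 ≤ f (r + t))) := by
    intro r
    have key : ∀ t, (∑ j ∈ Finset.range t, (a ((j + r) % n) : ℤ)) = f (r + t) - f r + t * k := by
      intro t
      have h1 : ∑ j ∈ Finset.range (r + t), (a (j % n) : ℤ)
          = (∑ j ∈ Finset.range r, (a (j % n) : ℤ)) + ∑ j ∈ Finset.range t, (a ((r + j) % n) : ℤ) := by
        exact_mod_cast sum_split r t (fun j => a (j % n))
      have h3 : ∑ j ∈ Finset.range t, (a ((j + r) % n) : ℤ)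
          = ∑ j ∈ Finset.range t, (a ((r + j) % n) : ℤ) := by
        apply Finset.sum_congr rfl; intro j _; rw [Nat.add_comm j r]
      simp only [hf, h3]
      push_cast at h1 ⊢
      rw [h1]
      push_cast
      ring
    constructor
    · intro h t h1 h2
      have := h t h1 h2
      have hz : (t * k + 1 : ℤ) ≤ ∑ j ∈ Finset.range t, (a ((j + r) % n) : ℤ) := by
        exact_mod_cast this
      rw [key t] at hz; linarith
    · intro h t h1 h2
      have hz := h t h1 h2
      have : (t * k + 1 : ℤ) ≤ ∑ j ∈ Finset.range t, (a ((j + r) % n) : ℤ) := by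
        rw [key t]; linarith
      exact_mod_cast this
  -- choose r as the largest argmin of f on range n
  set s : Finset ℕ := (Finset.range n).filter (fun t => ∀ u ∈ Finset.range n, f t ≤ f u) with hs
  have hsne : s.Nonempty := by
    obtain ⟨b, hb, hbmin⟩ := Finset.exists_min_image (Finset.range n) f ⟨0, Finset.mem_range.2 hn⟩
    exact ⟨b, Finset.mem_filter.2 ⟨hb, hbmin⟩⟩
  obtain ⟨r, hrdef⟩ : ∃ r, r = s.max' hsne := ⟨_, rfl⟩
  have hrs : r ∈ s := hrdef ▸ s.max'_mem hsne
  rw [hs, Finset.mem_filter, Finset.mem_range] at hrs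
  obtain ⟨hrn, hrmin⟩ := hrs
  have hstrict : ∀ u, r < u → u < n → f r + 1 ≤ f u := by
    intro u hru hun
    by_contra hc
    push_neg at hc
    have humem : u ∈ s := by
      rw [hs, Finset.mem_filter, Finset.mem_range]
      refine ⟨hun, fun v hv => ?_⟩
      have := hrmin v hv
      omega
    have := hrdef ▸ Finset.le_max' s u humem
    omega
  have hrworks : ∀ t : ℕ, 1 ≤ t → t ≤ n → f r + 1 ≤ f (r + t) := by
    intro t h1 h2
    rcases Nat.lt_or_ge (r + t) n with h | h
    · exact hstrict (r + t) (by omega) h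
    · have e1 : r + t = (r + t - n) + n := by omega
      rw [e1, hper]
      have := hrmin (r + t - n) (Finset.mem_range.2 (by omega))
      omega
  -- uniqueness helper
  have huniq : ∀ r1 r2, r1 < r2 → r2 < n →
      (∀ t : ℕ, 1 ≤ t → t ≤ n → f r1 + 1 ≤ f (r1 + t)) →
      (∀ t : ℕ, 1 ≤ t → t ≤ n → f r2 + 1 ≤ f (r2 + t)) → False := by
    intro r1 r2 h12 h2n hc1 hc2
    have e1 := hc1 (r2 - r1) (by omega) (by omega)
    rw [show r1 + (r2 - r1) = r2 by omega] at e1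
    have e2 := hc2 (r1 + n - r2) (by omega) (by omega)
    rw [show r2 + (r1 + n - r2) = r1 + n by omega, hper] at e2
    omega
  refine ⟨r, ⟨hrn, (hcond r).2 hrworks⟩, fun r' ⟨h1, h2⟩ => ?_⟩
  have hc' := (hcond r').1 h2
  rcases lt_trichotomy r' r with h | h | h
  · exact absurd (huniq r' r h hrn hc' hrworks) (by simp)
  · exact h
  · exact absurd (huniq r r' h h1 hrworks hc') (by simp)

section Key

variable {n k : ℕ}

def CondC (n k m : ℕ) (x : Fin (n*k+1) → ℝ) : Prop :=
  ∀ t : ℕ, 1 ≤ t → t ≤ n → t*k+1 ≤ ∑ j ∈ Finset.range t, icnt x ((j + (n - m)) % n)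

lemma cnt_shift {m : ℕ} (hn : 0 < n) (hm : m < n) {x : Fin (n*k+1) → ℝ} (hx : x ∈ Sset n k)
    {y : Fin (n*k+1) → ℝ} (hy : StrictMono y)
    (hr : Set.range y = Set.range (wfun n m x)) {t : ℕ} (ht : t ≤ n) :
    cnt y t = ∑ j ∈ Finset.range t, icnt x ((j + (n - m)) % n) := by
  have hxs : StrictMono x := strictMono_of_mem hx
  have hpos : ∀ i, 0 < x i := fun i => (hx.2 i).1
  have hlt : ∀ i, x i < n := fun i => (hx.2 i).2.1
  have hni : ∀ i, ∀ z : ℤ, x i ≠ (z : ℝ) := fun i => (hx.2 i).2.2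
  have hwi : Function.Injective (wfun n m x) := w_inj hn hm hxs hpos hlt hni
  have h1 : cnt y t = cnt (wfun n m x) t := cnt_congr hy.injective hwi hr t
  have h2 : cnt (wfun n m x) t = ∑ j ∈ Finset.range t, icnt (wfun n m x) j :=
    cnt_nat_eq_sum (w_pos hn hm hpos hlt hni) (w_nonint hn hm hpos hlt hni) t
  rw [h1, h2]
  apply Finset.sum_congr rfl
  intro j hj
  exact icnt_w hn hm hxs hpos hlt hni (lt_of_lt_of_le (Finset.mem_range.1 hj) ht)

lemma mem_S_of_range {m : ℕ} (hn : 0 < n) (hm : m < n) {x : Fin (n*k+1) → ℝ}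
    (hx : x ∈ Sset n k) {y : Fin (n*k+1) → ℝ}
    (hy : ∀ i j : Fin (n*k+1), i < j → y i < y j)
    (hr : Set.range y = Set.range (wfun n m x)) : y ∈ Sset n k := by
  have hpos : ∀ i, 0 < x i := fun i => (hx.2 i).1
  have hlt : ∀ i, x i < n := fun i => (hx.2 i).2.1
  have hni : ∀ i, ∀ z : ℤ, x i ≠ (z : ℝ) := fun i => (hx.2 i).2.2
  refine ⟨hy, fun i => ?_⟩
  have hmem : y i ∈ Set.range (wfun n m x) := hr ▸ Set.mem_range_self i
  obtain ⟨j, hj⟩ := hmem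
  rw [← hj]
  exact ⟨w_pos hn hm hpos hlt hni j, w_lt hn hm hpos hlt hni j, w_nonint hn hm hpos hlt hni j⟩

lemma key_iff {m : ℕ} (hn : 0 < n) (hm : m < n) {x : Fin (n*k+1) → ℝ} (hx : x ∈ Sset n k) :
    (∀ y : Fin (n*k+1) → ℝ, (∀ i j : Fin (n*k+1), i < j → y i < y j) →
      Set.range y = (fun t => realMod t n) '' Set.range (fun i => x i + (m:ℝ)) →
      y ∈ Vset n k) ↔ CondC n k m x := by
  have hxs : StrictMono x := strictMono_of_mem hx
  have hpos : ∀ i, 0 < x i := fun i => (hx.2 i).1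
  have hlt : ∀ i, x i < n := fun i => (hx.2 i).2.1
  have hni : ∀ i, ∀ z : ℤ, x i ≠ (z : ℝ) := fun i => (hx.2 i).2.2
  have himg : (fun t => realMod t n) '' Set.range (fun i : Fin (n*k+1) => x i + (m:ℝ))
      = Set.range (wfun n m x) := (Set.range_comp _ _).symm
  have hwi : Function.Injective (wfun n m x) := w_inj hn hm hxs hpos hlt hni
  constructor
  · intro h t h1 h2
    set σ := Tuple.sort (wfun n m x) with hσ
    have hmono : Monotone (wfun n m x ∘ σ) := Tuple.monotone_sort _
    have hstr : StrictMono (wfun n m x ∘ σ) :=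
      hmono.strictMono_of_injective (hwi.comp σ.injective)
    have hrange : Set.range (wfun n m x ∘ σ) = Set.range (wfun n m x) :=
      σ.surjective.range_comp _
    have hv := h (wfun n m x ∘ σ) (fun i j hij => hstr hij) (by rw [hrange, himg])
    have hcv := (mem_V_iff hn hv.1).1 hv t h1 h2
    rwa [cnt_shift hn hm hx hstr hrange h2] at hcv
  · intro h y hy hr
    rw [himg] at hr
    have hyS : y ∈ Sset n k := mem_S_of_range hn hm hx hy hr
    have hstr : StrictMono y := fun i j hij => hy i j hij
    rw [mem_V_iff hn hyS]
    intro t h1 h2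
    rw [cnt_shift hn hm hx hstr hr h2]
    exact h t h1 h2

lemma mod_inv {m : ℕ} (hn : 0 < n) (hm : m < n) : (n - (n - m) % n) % n = m := by
  rcases Nat.eq_zero_or_pos m with h | h
  · subst h
    simp [Nat.mod_self]
  · have h1 : (n - m) % n = n - m := Nat.mod_eq_of_lt (by omega)
    rw [h1, show n - (n - m) = m from by omega, Nat.mod_eq_of_lt hm]

lemma bridge {m : ℕ} (x : Fin (n*k+1) → ℝ) :
    CondC n k m x ↔ (∀ t : ℕ, 1 ≤ t → t ≤ n →
      t*k+1 ≤ ∑ j ∈ Finset.range t, icnt x ((j + (n - m) % n) % n)) := by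
  have hco : ∀ t : ℕ, ∑ j ∈ Finset.range t, icnt x ((j + (n - m)) % n)
      = ∑ j ∈ Finset.range t, icnt x ((j + (n - m) % n) % n) := by
    intro t
    apply Finset.sum_congr rfl
    intro j _
    rw [Nat.add_mod_mod]
  unfold CondC
  constructor <;> intro h t h1 h2
  · rw [← hco]; exact h t h1 h2
  · rw [hco]; exact h t h1 h2

lemma part1 (hn : 0 < n) {x : Fin (n*k+1) → ℝ} (hx : x ∈ Sset n k) :
    ∃! m : ℕ, m < n ∧ ∀ y : Fin (n * k + 1) → ℝ,
        (∀ i j : Fin (n * k + 1), i < j → y i < y j) →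
        Set.range y = (fun t => realMod t n) '' Set.range (fun i => x i + (m:ℝ)) →
        y ∈ Vset n k := by
  have hpos : ∀ i, 0 < x i := fun i => (hx.2 i).1
  have hlt : ∀ i, x i < n := fun i => (hx.2 i).2.1
  have hni : ∀ i, ∀ z : ℤ, x i ≠ (z : ℝ) := fun i => (hx.2 i).2.2
  have ha : ∑ j ∈ Finset.range n, icnt x j = n * k + 1 :=
    sum_icnt hpos hni hlt
  obtain ⟨r, ⟨hr, hcc⟩, hru⟩ := cycle_lemma n k hn (icnt x) ha
  have hm0lt : (n - r) % n < n := Nat.mod_lt _ hn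
  have hkey : (n - (n - r) % n) % n = r := mod_inv hn hr
  refine ⟨(n - r) % n, ⟨hm0lt, ?_⟩, ?_⟩
  · apply (key_iff hn hm0lt hx).2
    apply (bridge x).2
    rw [hkey]
    exact hcc
  · rintro m' ⟨hm', hY⟩
    have hcc' := (bridge x).1 ((key_iff hn hm' hx).1 hY)
    have hr' : (n - m') % n < n := Nat.mod_lt _ hn
    have := hru ((n - m') % n) ⟨hr', hcc'⟩
    have hminv := mod_inv hn hm'
    rw [this] at hminv
    exact hminv.symm

end Key

section Meas

open MeasureTheory
open scoped ENNReal

variable {n k N : ℕ}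

def Cube (n N : ℕ) : Set (Fin N → ℝ) := Set.pi Set.univ fun _ => Set.Ioo (0:ℝ) n

def Sreg (n N : ℕ) : Set (Fin N → ℝ) := {x | StrictMono x} ∩ Cube n N

lemma meas_cube : MeasurableSet (Cube n N) :=
  MeasurableSet.univ_pi fun _ => measurableSet_Ioo

lemma meas_strictMono : MeasurableSet {x : Fin N → ℝ | StrictMono x} := by
  have he : {x : Fin N → ℝ | StrictMono x}
      = ⋂ (i : Fin N), ⋂ (j : Fin N), ⋂ (_ : i < j), {x : Fin N → ℝ | x i < x j} := by
    ext x
    simp only [Set.mem_iInter, Set.mem_setOf_eq]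
    exact ⟨fun h i j hij => h hij, fun h a b hab => h a b hab⟩
  rw [he]
  exact MeasurableSet.iInter fun i => MeasurableSet.iInter fun j => MeasurableSet.iInter
    fun _ => measurableSet_lt (measurable_pi_apply i) (measurable_pi_apply j)

lemma meas_Sreg : MeasurableSet (Sreg n N) := meas_strictMono.inter meas_cube

lemma Sset_eq : Sset n k = Sreg n (n*k+1) ∩ ⋂ (i : Fin (n*k+1)), ⋂ (z : ℤ),
    {x : Fin (n*k+1) → ℝ | x i ≠ (z : ℝ)} := by
  ext x
  simp only [Sset, Sreg, Cube, Set.mem_inter_iff, Set.mem_setOf_eq, Set.mem_iInter,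
    Set.mem_pi, Set.mem_univ, true_implies, Set.mem_Ioo]
  constructor
  · rintro ⟨h1, h2⟩
    exact ⟨⟨fun i j hij => h1 i j hij, fun i => ⟨(h2 i).1, (h2 i).2.1⟩⟩, fun i z => (h2 i).2.2 z⟩
  · rintro ⟨⟨h1, h2⟩, h3⟩
    exact ⟨fun i j hij => h1 hij, fun i => ⟨(h2 i).1, (h2 i).2, fun z => h3 i z⟩⟩

lemma meas_Sset : MeasurableSet (Sset n k) := by
  rw [Sset_eq]
  refine meas_Sreg.inter (MeasurableSet.iInter fun i => MeasurableSet.iInter fun z => ?_)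
  exact (measurableSet_singleton ((z : ℝ))).preimage (measurable_pi_apply i) |>.compl

lemma meas_Vset : MeasurableSet (Vset n k) := by
  have he : Vset n k = Sset n k ∩ ⋂ (i : Fin (n*k+1)), ⋂ (j : ℕ), ⋂ (_ : 1 ≤ j), ⋂ (_ : j ≤ n),
      ⋂ (_ : (i : ℕ) = j * k), {x : Fin (n*k+1) → ℝ | x i < j} := by
    ext x
    simp only [Vset, Set.mem_inter_iff, Set.mem_setOf_eq, Set.mem_iInter]
  rw [he]
  refine meas_Sset.inter (MeasurableSet.iInter fun i => MeasurableSet.iInter fun j =>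
    MeasurableSet.iInter fun _ => MeasurableSet.iInter fun _ => MeasurableSet.iInter fun _ => ?_)
  exact measurableSet_lt (measurable_pi_apply i) measurable_const

lemma meas_count (A : Set ℝ) [DecidablePred fun t : ℝ => t ∈ A] (hA : MeasurableSet A) (c : ℕ) :
    MeasurableSet {x : Fin N → ℝ | (Finset.univ.filter fun i => x i ∈ A).card = c} := by
  have he : {x : Fin N → ℝ | (Finset.univ.filter fun i => x i ∈ A).card = c}
      = ⋃ (s : Finset (Fin N)) (_ : s.card = c), ⋂ (i : Fin N),
        {x : Fin N → ℝ | i ∈ s ↔ x i ∈ A} := by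
    ext x
    simp only [Set.mem_setOf_eq, Set.mem_iUnion, Set.mem_iInter]
    constructor
    · intro h
      refine ⟨Finset.univ.filter fun i => x i ∈ A, h, fun i => ?_⟩
      simp
    · rintro ⟨s, hs, hmem⟩
      have : Finset.univ.filter (fun i => x i ∈ A) = s := by
        ext i
        simp [hmem i]
      rw [this]
      exact hs
  rw [he]
  refine MeasurableSet.iUnion fun s => MeasurableSet.iUnion fun _ =>
    MeasurableSet.iInter fun i => ?_
  by_cases hi : i ∈ s
  · simp only [hi, true_iff]
    exact hA.preimage (measurable_pi_apply i)
  · simp only [hi, false_iff]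
    exact (hA.preimage (measurable_pi_apply i)).compl

lemma vol_cube : volume (Cube n N) = (ENNReal.ofReal n)^N := by
  rw [Cube, volume_pi_pi]
  simp [Real.volume_Ioo]

lemma null_hyper (i : Fin N) (z : ℝ) : volume {x : Fin N → ℝ | x i = z} = 0 := by
  rw [volume_pi]
  exact Measure.pi_hyperplane (μ := fun _ : Fin N => (volume : Measure ℝ)) i z

lemma null_diag {i j : Fin N} (h : i ≠ j) : volume {x : Fin N → ℝ | x i = x j} = 0 := by
  have he : {x : Fin N → ℝ | x i = x j} =
      (LinearMap.ker ((LinearMap.proj i : (Fin N → ℝ) →ₗ[ℝ] ℝ) - LinearMap.proj j)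
        : Set (Fin N → ℝ)) := by
    ext x; simp [LinearMap.mem_ker, sub_eq_zero]
  rw [he]
  apply Measure.addHaar_submodule
  intro htop
  have h1 : (fun l : Fin N => if l = i then (1:ℝ) else 0) ∈
      LinearMap.ker ((LinearMap.proj i : (Fin N → ℝ) →ₗ[ℝ] ℝ) - LinearMap.proj j) :=
    htop ▸ Submodule.mem_top
  simp [LinearMap.mem_ker, sub_eq_zero, h.symm] at h1

lemma vol_Sset_eq_Sreg : volume (Sset n k) = volume (Sreg n (n*k+1)) := by
  set U : Set (Fin (n*k+1) → ℝ) := ⋃ (i : Fin (n*k+1)), ⋃ (z : ℤ),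
    {x : Fin (n*k+1) → ℝ | x i = (z : ℝ)} with hU
  have hUnull : volume U = 0 := by
    refine measure_iUnion_null fun i => measure_iUnion_null fun z => null_hyper i (z : ℝ)
  have hsub : Sset n k ⊆ Sreg n (n*k+1) := by
    rw [Sset_eq]; exact Set.inter_subset_left
  have hsup : Sreg n (n*k+1) ⊆ Sset n k ∪ U := by
    intro x hx
    by_cases hni : ∀ i : Fin (n*k+1), ∀ z : ℤ, x i ≠ (z : ℝ)
    · left
      rw [Sset_eq]
      refine ⟨hx, ?_⟩
      simp only [Set.mem_iInter, Set.mem_setOf_eq]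
      exact fun i z => hni i z
    · right
      push_neg at hni
      obtain ⟨i, z, hz⟩ := hni
      exact Set.mem_iUnion.2 ⟨i, Set.mem_iUnion.2 ⟨z, hz⟩⟩
  refine le_antisymm (measure_mono hsub) ?_
  calc volume (Sreg n (n*k+1)) ≤ volume (Sset n k ∪ U) := measure_mono hsup
    _ ≤ volume (Sset n k) + volume U := measure_union_le _ _
    _ = volume (Sset n k) := by rw [hUnull, add_zero]

lemma reindex_mp (e : Fin N ≃ Fin N) :
    MeasurePreserving (fun x : Fin N → ℝ => fun i => x (e i)) volume volume := by
  have h := volume_measurePreserving_piCongrLeft (fun _ : Fin N => ℝ) e.symm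
  convert h using 1
  ext x i
  simp [MeasurableEquiv.piCongrLeft, Equiv.piCongrLeft, Equiv.piCongrLeft']

def Rreg (n : ℕ) {N : ℕ} (σ : Equiv.Perm (Fin N)) : Set (Fin N → ℝ) :=
  {x | StrictMono (x ∘ σ)} ∩ Cube n N

lemma meas_Rreg (σ : Equiv.Perm (Fin N)) : MeasurableSet (Rreg n σ) := by
  have : {x : Fin N → ℝ | StrictMono (x ∘ σ)}
      = (fun x : Fin N → ℝ => fun i => x (σ i)) ⁻¹' {x | StrictMono x} := rfl
  exact (this ▸ meas_strictMono.preimage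
    (measurable_pi_lambda _ fun i => measurable_pi_apply (σ i))).inter meas_cube

lemma Rreg_preimage (σ : Equiv.Perm (Fin N)) :
    (fun x : Fin N → ℝ => fun i => x (σ i)) ⁻¹' (Sreg n N) = Rreg n σ := by
  ext x
  simp only [Sreg, Rreg, Cube, Set.mem_preimage, Set.mem_inter_iff, Set.mem_setOf_eq,
    Set.mem_pi, Set.mem_univ, true_implies]
  constructor
  · rintro ⟨h1, h2⟩
    refine ⟨h1, fun i => ?_⟩
    have := h2 (σ.symm i)
    simpa using this
  · rintro ⟨h1, h2⟩
    exact ⟨h1, fun i => h2 (σ i)⟩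

lemma vol_Rreg (σ : Equiv.Perm (Fin N)) : volume (Rreg n σ) = volume (Sreg n N) := by
  rw [← Rreg_preimage σ]
  exact (reindex_mp (σ : Fin N ≃ Fin N)).measure_preimage meas_Sreg.nullMeasurableSet

lemma Rreg_disjoint : Pairwise (Function.onFun Disjoint (fun σ : Equiv.Perm (Fin N) => Rreg n σ)) := by
  intro σ τ hne
  rw [Function.onFun]
  rw [Set.disjoint_left]
  intro x hxσ hxτ
  apply hne
  have hs : StrictMono (x ∘ σ) := hxσ.1
  have ht : StrictMono (x ∘ τ) := hxτ.1
  set ρ : Equiv.Perm (Fin N) := σ.trans τ.symm with hρdef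
  have hρ : StrictMono (ρ : Fin N → Fin N) := by
    intro i j hij
    have h1 : x (σ i) < x (σ j) := hs hij
    have h2 : x (τ (ρ i)) < x (τ (ρ j)) := by
      simpa [hρdef] using h1
    exact (ht.lt_iff_lt).1 h2
  have hiso : ∀ i, ρ i = i := by
    have hsub := Subsingleton.elim (hρ.orderIsoOfSurjective _ ρ.surjective) (OrderIso.refl (Fin N))
    intro i
    have h2 := DFunLike.congr_fun hsub i
    simpa using h2
  apply Equiv.ext
  intro i
  have h3 := hiso i
  simp only [hρdef, Equiv.trans_apply] at h3
  have h4 := congrArg τ h3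
  simpa using h4

lemma vol_Sreg_mul : (Nat.factorial N : ℝ≥0∞) * volume (Sreg n N) = (ENNReal.ofReal n)^N := by
  classical
  set D : Set (Fin N → ℝ) := ⋃ (p : Fin N × Fin N) (_ : p.1 ≠ p.2),
    {x : Fin N → ℝ | x p.1 = x p.2} with hD
  have hDnull : volume D = 0 :=
    measure_iUnion_null fun p => measure_iUnion_null fun hp => null_diag hp
  have hsub : (⋃ σ : Equiv.Perm (Fin N), Rreg n σ) ⊆ Cube n N := by
    intro x hx
    obtain ⟨σ, hσ⟩ := Set.mem_iUnion.1 hx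
    exact hσ.2
  have hcover : Cube n N ⊆ (⋃ σ : Equiv.Perm (Fin N), Rreg n σ) ∪ D := by
    intro x hx
    by_cases hinj : Function.Injective x
    · left
      refine Set.mem_iUnion.2 ⟨Tuple.sort x, ?_, hx⟩
      have hmono : Monotone (x ∘ Tuple.sort x) := Tuple.monotone_sort x
      exact hmono.strictMono_of_injective (hinj.comp (Tuple.sort x).injective)
    · right
      rw [Function.not_injective_iff] at hinj
      obtain ⟨i, j, hxij, hij⟩ := hinj
      exact Set.mem_iUnion.2 ⟨(i, j), Set.mem_iUnion.2 ⟨hij, hxij⟩⟩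
  have hvol_union : volume (⋃ σ : Equiv.Perm (Fin N), Rreg n σ)
      = (Nat.factorial N : ℝ≥0∞) * volume (Sreg n N) := by
    rw [measure_iUnion Rreg_disjoint (fun σ => meas_Rreg σ)]
    rw [tsum_fintype]
    have : ∀ σ : Equiv.Perm (Fin N), volume (Rreg n σ) = volume (Sreg n N) := vol_Rreg
    rw [Finset.sum_congr rfl (fun σ _ => this σ), Finset.sum_const, Finset.card_univ,
      Fintype.card_perm, Fintype.card_fin, nsmul_eq_mul]
  have h1 : volume (Cube n N) ≤ (Nat.factorial N : ℝ≥0∞) * volume (Sreg n N) := by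
    calc volume (Cube n N) ≤ volume ((⋃ σ : Equiv.Perm (Fin N), Rreg n σ) ∪ D) :=
          measure_mono hcover
      _ ≤ volume (⋃ σ : Equiv.Perm (Fin N), Rreg n σ) + volume D := measure_union_le _ _
      _ = (Nat.factorial N : ℝ≥0∞) * volume (Sreg n N) := by rw [hDnull, add_zero, hvol_union]
  have h2 : (Nat.factorial N : ℝ≥0∞) * volume (Sreg n N) ≤ volume (Cube n N) := by
    rw [← hvol_union]
    exact measure_mono hsub
  rw [← vol_cube]
  exact le_antisymm h2 h1

end Meas

section TMap

variable {n k : ℕ}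

lemma card_val_lt {N : ℕ} {c : ℕ} (hc : c ≤ N) :
    (Finset.univ.filter fun i : Fin N => (i : ℕ) < c).card = c := by
  have he : Finset.univ.map (Fin.castLEEmb hc) = Finset.univ.filter fun i : Fin N => (i : ℕ) < c := by
    ext a
    simp only [Finset.mem_map, Finset.mem_univ, true_and, Finset.mem_filter]
    constructor
    · rintro ⟨b, hb⟩
      rw [← hb]
      simp [b.isLt]
    · intro ha
      exact ⟨⟨(a : ℕ), ha⟩, by simp [Fin.castLEEmb, Fin.castLE, Fin.ext_iff]⟩
  rw [← he, Finset.card_map, Finset.card_univ, Fintype.card_fin]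

lemma card_val_ge {N : ℕ} {c : ℕ} (hc : c ≤ N) :
    (Finset.univ.filter fun i : Fin N => N - c ≤ (i : ℕ)).card = c := by
  have h1 : (Finset.univ.filter fun i : Fin N => (i : ℕ) < N - c).card = N - c :=
    card_val_lt (by omega)
  have h2 := Finset.card_filter_add_card_filter_not
    (s := (Finset.univ : Finset (Fin N))) (p := fun i : Fin N => (i : ℕ) < N - c)
  rw [Finset.card_univ, Fintype.card_fin] at h2
  have h3 : (Finset.univ.filter fun i : Fin N => ¬ ((i : ℕ) < N - c)).card
      = (Finset.univ.filter fun i : Fin N => N - c ≤ (i : ℕ)).card := by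
    congr 1
    apply Finset.filter_congr
    intro i _
    simp [not_lt]
  omega

/-- the translation vector -/
def vvec (n : ℕ) (m c : ℕ) {N : ℕ} : Fin N → ℝ :=
  fun i => if (i : ℕ) < c then (m : ℝ) - n else (m : ℝ)

/-- the piecewise rotation-translation map -/
def Tmap (n k m c : ℕ) : (Fin (n*k+1) → ℝ) → (Fin (n*k+1) → ℝ) :=
  fun x => fun i => x (i - (c : Fin (n*k+1))) + vvec n m c i

lemma sub_val {c : ℕ} (hc : c ≤ n*k+1) (i : Fin (n*k+1)) :
    ((i - (c : Fin (n*k+1))) : Fin (n*k+1)).val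
      = if (i : ℕ) < c then (i : ℕ) + (n*k+1 - c) else (i : ℕ) - c := by
  have h1 : (i - (c : Fin (n*k+1))).val
      = ((n*k+1 - ((c : Fin (n*k+1)) : ℕ)) + (i : ℕ)) % (n*k+1) := by
    rw [Fin.sub_def]
  have h2 : ((c : Fin (n*k+1)) : ℕ) = c % (n*k+1) := by rw [Fin.val_natCast]
  have hilt : (i : ℕ) < n*k+1 := i.isLt
  rcases eq_or_lt_of_le hc with h | h
  · have hc0 : c % (n*k+1) = 0 := by rw [h, Nat.mod_self]
    rw [h1, h2, hc0]
    have : (n*k+1 - 0 + (i:ℕ)) = (i : ℕ) + (n*k+1) := by omega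
    rw [this, Nat.add_mod_right, Nat.mod_eq_of_lt hilt]
    have : (i : ℕ) < c := by omega
    rw [if_pos this]; omega
  · have hcc : c % (n*k+1) = c := Nat.mod_eq_of_lt h
    rw [h1, h2, hcc]
    by_cases hi : (i : ℕ) < c
    · rw [Nat.mod_eq_of_lt (by omega)]
      simp [hi]
      omega
    · rw [show n*k+1 - c + (i:ℕ) = ((i:ℕ) - c) + (n*k+1) by omega, Nat.add_mod_right,
        Nat.mod_eq_of_lt (by omega)]
      simp [hi]

lemma add_val {c : ℕ} (hc : c ≤ n*k+1) (i : Fin (n*k+1)) :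
    ((i + (c : Fin (n*k+1))) : Fin (n*k+1)).val
      = if (i : ℕ) + c < n*k+1 then (i : ℕ) + c else (i : ℕ) + c - (n*k+1) := by
  have h1 : (i + (c : Fin (n*k+1))).val = ((i : ℕ) + ((c : Fin (n*k+1)) : ℕ)) % (n*k+1) := by
    rw [Fin.add_def]
  have h2 : ((c : Fin (n*k+1)) : ℕ) = c % (n*k+1) := by rw [Fin.val_natCast]
  have hilt : (i : ℕ) < n*k+1 := i.isLt
  rcases eq_or_lt_of_le hc with h | h
  · have hc0 : c % (n*k+1) = 0 := by rw [h, Nat.mod_self]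
    rw [h1, h2, hc0, Nat.add_zero, Nat.mod_eq_of_lt hilt]
    have : ¬ ((i : ℕ) + c < n*k+1) := by omega
    simp [this]
    omega
  · have hcc : c % (n*k+1) = c := Nat.mod_eq_of_lt h
    rw [h1, h2, hcc]
    by_cases hi : (i : ℕ) + c < n*k+1
    · rw [Nat.mod_eq_of_lt hi]; simp [hi]
    · rw [show (i:ℕ) + c = ((i:ℕ) + c - (n*k+1)) + (n*k+1) by omega, Nat.add_mod_right,
        Nat.mod_eq_of_lt (by omega)]
      simp [hi]
      omega

variable {m : ℕ} {x : Fin (n*k+1) → ℝ}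

/-- Structure of `Tmap` on the piece where exactly `c` coordinates exceed `n - m`. -/
lemma L1 (hn : 0 < n) (hm : m < n) (hx : x ∈ Sset n k)
    {c : ℕ} (hc : cntGT x ((n:ℝ) - m) = c) :
    c ≤ n*k+1 ∧
    (∀ i, Tmap n k m c x i = wfun n m x (i - (c : Fin (n*k+1)))) ∧
    StrictMono (Tmap n k m c x) ∧
    Set.range (Tmap n k m c x) = Set.range (wfun n m x) ∧
    Tmap n k m c x ∈ Sset n k ∧
    cnt (Tmap n k m c x) ((m:ℝ)) = c := by
  have hxs : StrictMono x := strictMono_of_mem hx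
  have hpos : ∀ i, 0 < x i := fun i => (hx.2 i).1
  have hlt : ∀ i, x i < n := fun i => (hx.2 i).2.1
  have hni : ∀ i, ∀ z : ℤ, x i ≠ (z : ℝ) := fun i => (hx.2 i).2.2
  have hne : ∀ i, x i ≠ (n:ℝ) - m := by
    intro i hcon
    apply hni i ((n : ℤ) - m)
    rw [hcon]; push_cast; ring
  have hc' : c ≤ n*k+1 := by
    rw [← hc]
    unfold cntGT
    calc (Finset.univ.filter fun i => (n:ℝ) - m < x i).card ≤ Finset.univ.card :=
          Finset.card_filter_le _ _
      _ = n*k+1 := by rw [Finset.card_univ, Fintype.card_fin]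
  have hposidx : ∀ i : Fin (n*k+1), ((n:ℝ) - m < x i ↔ n*k+1 - c ≤ (i : ℕ)) := by
    intro i
    rw [← hc]
    exact gt_iff hxs hne i
  have hmr : (m : ℝ) < n := by exact_mod_cast hm
  -- pointwise identification with wfun
  have hw : ∀ i, Tmap n k m c x i = wfun n m x (i - (c : Fin (n*k+1))) := by
    intro i
    unfold Tmap vvec
    by_cases hi : (i : ℕ) < c
    · have hval : ((i - (c : Fin (n*k+1))) : Fin (n*k+1)).val = (i : ℕ) + (n*k+1 - c) := by
        rw [sub_val hc']; simp [hi]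
      have hgt : (n:ℝ) - m < x (i - (c : Fin (n*k+1))) := by
        rw [hposidx]
        omega
      rcases w_spec hn hm hpos hlt hni (i - (c : Fin (n*k+1))) with ⟨h1, h2⟩ | ⟨h1, h2⟩
      · exfalso; linarith
      · rw [h2]; simp [hi]; ring
    · have hval : ((i - (c : Fin (n*k+1))) : Fin (n*k+1)).val = (i : ℕ) - c := by
        rw [sub_val hc']; simp [hi]
      have hlt' : x (i - (c : Fin (n*k+1))) < (n:ℝ) - m := by
        rcases lt_or_gt_of_ne (hne (i - (c : Fin (n*k+1)))) with h | h
        · exact h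
        · exfalso
          have h' := (hposidx _).1 h
          rw [hval] at h'
          have := i.isLt
          omega
      rcases w_spec hn hm hpos hlt hni (i - (c : Fin (n*k+1))) with ⟨h1, h2⟩ | ⟨h1, h2⟩
      · rw [h2]; simp [hi]
      · exfalso; linarith
  -- values on each side
  have hlow : ∀ i : Fin (n*k+1), (i : ℕ) < c →
      Tmap n k m c x i = x (i - (c : Fin (n*k+1))) + m - n := by
    intro i hi
    unfold Tmap vvec
    simp [hi]
    ring
  have hhigh : ∀ i : Fin (n*k+1), ¬ ((i : ℕ) < c) →
      Tmap n k m c x i = x (i - (c : Fin (n*k+1))) + m := by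
    intro i hi
    unfold Tmap vvec
    simp [hi]
  have hmono : StrictMono (Tmap n k m c x) := by
    intro i j hij
    have hij' : (i : ℕ) < (j : ℕ) := hij
    by_cases hi : (i : ℕ) < c <;> by_cases hj : (j : ℕ) < c
    · rw [hlow i hi, hlow j hj]
      have : x (i - (c : Fin (n*k+1))) < x (j - (c : Fin (n*k+1))) := by
        apply hxs
        rw [Fin.lt_def, sub_val hc', sub_val hc']
        simp [hi, hj]
        omega
      linarith
    · rw [hlow i hi, hhigh j hj]
      have h1 : x (i - (c : Fin (n*k+1))) < n := hlt _
      have h2 : 0 < x (j - (c : Fin (n*k+1))) := hpos _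
      linarith
    · omega
    · rw [hhigh i hi, hhigh j hj]
      have : x (i - (c : Fin (n*k+1))) < x (j - (c : Fin (n*k+1))) := by
        apply hxs
        rw [Fin.lt_def, sub_val hc', sub_val hc']
        simp [hi, hj]
        omega
      linarith
  have hfun : Tmap n k m c x = wfun n m x ∘ (Equiv.subRight ((c : Fin (n*k+1)))) := by
    funext i
    exact hw i
  have hrange : Set.range (Tmap n k m c x) = Set.range (wfun n m x) := by
    rw [hfun]
    exact (Equiv.subRight ((c : Fin (n*k+1)))).surjective.range_comp _
  have hS : Tmap n k m c x ∈ Sset n k := by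
    refine ⟨fun i j hij => hmono hij, fun i => ?_⟩
    rw [hw i]
    exact ⟨w_pos hn hm hpos hlt hni _, w_lt hn hm hpos hlt hni _, w_nonint hn hm hpos hlt hni _⟩
  have hcnt : cnt (Tmap n k m c x) ((m:ℝ)) = c := by
    unfold cnt
    have hiff : ∀ i : Fin (n*k+1), (Tmap n k m c x i < m ↔ (i : ℕ) < c) := by
      intro i
      by_cases hi : (i : ℕ) < c
      · rw [hlow i hi]
        have := hlt (i - (c : Fin (n*k+1)))
        constructor
        · intro _; exact hi
        · intro _; linarith
      · rw [hhigh i hi]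
        have := hpos (i - (c : Fin (n*k+1)))
        constructor
        · intro hcon; exfalso; linarith
        · intro hcon; exact absurd hcon hi
    have heq : (Finset.univ.filter fun i => Tmap n k m c x i < (m:ℝ))
        = Finset.univ.filter fun i : Fin (n*k+1) => (i : ℕ) < c := by
      apply Finset.filter_congr
      intro i _
      first
      | exact hiff i
      | (simp only [eq_iff_iff]; exact hiff i)
    rw [heq]
    exact card_val_lt hc'
  exact ⟨hc', hw, hmono, hrange, hS, hcnt⟩

end TMap

section TMap2

variable {n k : ℕ} {m : ℕ}

/-- the inverse of `Tmap` -/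
def Umap (n k m c : ℕ) : (Fin (n*k+1) → ℝ) → (Fin (n*k+1) → ℝ) :=
  fun y => fun i => y (i + (c : Fin (n*k+1))) - vvec n m c (i + (c : Fin (n*k+1)))

lemma Tmap_Umap (c : ℕ) (y : Fin (n*k+1) → ℝ) : Tmap n k m c (Umap n k m c y) = y := by
  funext i
  unfold Tmap Umap
  rw [sub_add_cancel]
  ring

lemma Tmap_inj (c : ℕ) : Function.Injective (Tmap n k m c) := by
  intro x1 x2 h
  funext j
  have := congrFun h (j + (c : Fin (n*k+1)))
  unfold Tmap at this
  rw [add_sub_cancel_right] at this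
  exact add_right_cancel this

/-- inverse structure lemma : if `y ∈ Sset` has exactly `c` coordinates below `m`,
then `Umap y` lies in `Sset` with exactly `c` coordinates above `n - m`. -/
lemma L2 (hn : 0 < n) (hm : m < n) {y : Fin (n*k+1) → ℝ} (hy : y ∈ Sset n k)
    {c : ℕ} (hc : cnt y ((m:ℝ)) = c) :
    Umap n k m c y ∈ Sset n k ∧ cntGT (Umap n k m c y) ((n:ℝ) - m) = c := by
  have hys : StrictMono y := strictMono_of_mem hy
  have hpos : ∀ i, 0 < y i := fun i => (hy.2 i).1
  have hlt : ∀ i, y i < n := fun i => (hy.2 i).2.1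
  have hni : ∀ i, ∀ z : ℤ, y i ≠ (z : ℝ) := fun i => (hy.2 i).2.2
  have hmr : (m : ℝ) < n := by exact_mod_cast hm
  have hc' : c ≤ n*k+1 := by
    rw [← hc]
    unfold cnt
    calc (Finset.univ.filter fun i => y i < (m:ℝ)).card ≤ Finset.univ.card :=
          Finset.card_filter_le _ _
      _ = n*k+1 := by rw [Finset.card_univ, Fintype.card_fin]
  have hidx : ∀ i : Fin (n*k+1), (y i < m ↔ (i : ℕ) < c) := by
    intro i
    rw [cnt_lt_iff hys i ((m:ℝ)), hc]
    omega
  have hge : ∀ i : Fin (n*k+1), ¬ ((i : ℕ) < c) → (m : ℝ) < y i := by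
    intro i hi
    have h1 : ¬ (y i < m) := fun hcon => hi ((hidx i).1 hcon)
    have h2 : y i ≠ m := by
      intro hcon
      exact hni i m (by rw [hcon]; simp)
    cases lt_or_gt_of_ne h2 with
    | inl h => exact absurd h h1
    | inr h => exact h
  -- values of Umap
  have hval_lo : ∀ i : Fin (n*k+1), (i : ℕ) < n*k+1 - c →
      ((i + (c : Fin (n*k+1))) : Fin (n*k+1)).val = (i : ℕ) + c := by
    intro i hi
    rw [add_val hc']
    simp [show (i:ℕ) + c < n*k+1 by omega]
  have hval_hi : ∀ i : Fin (n*k+1), n*k+1 - c ≤ (i : ℕ) →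
      ((i + (c : Fin (n*k+1))) : Fin (n*k+1)).val = (i : ℕ) + c - (n*k+1) := by
    intro i hi
    have := i.isLt
    rw [add_val hc']
    have : ¬ ((i:ℕ) + c < n*k+1) := by omega
    simp [this]
  have hU_lo : ∀ i : Fin (n*k+1), (i : ℕ) < n*k+1 - c →
      Umap n k m c y i = y (i + (c : Fin (n*k+1))) - m := by
    intro i hi
    unfold Umap vvec
    have h1 := hval_lo i hi
    have h2 : ¬ (((i + (c : Fin (n*k+1))) : Fin (n*k+1)).val < c) := by omega
    simp [h2]
  have hU_hi : ∀ i : Fin (n*k+1), n*k+1 - c ≤ (i : ℕ) →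
      Umap n k m c y i = y (i + (c : Fin (n*k+1))) - m + n := by
    intro i hi
    unfold Umap vvec
    have h1 := hval_hi i hi
    have h2 : ((i + (c : Fin (n*k+1))) : Fin (n*k+1)).val < c := by
      have := i.isLt
      omega
    simp [h2]
    ring
  -- bounds on each side
  have hB_lo : ∀ i : Fin (n*k+1), (i : ℕ) < n*k+1 - c →
      0 < Umap n k m c y i ∧ Umap n k m c y i < (n:ℝ) - m := by
    intro i hi
    rw [hU_lo i hi]
    have h2 : ¬ (((i + (c : Fin (n*k+1))) : Fin (n*k+1)).val < c) := by
      have := hval_lo i hi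
      omega
    have h3 := hge _ h2
    have h4 := hlt (i + (c : Fin (n*k+1)))
    constructor <;> linarith
  have hB_hi : ∀ i : Fin (n*k+1), n*k+1 - c ≤ (i : ℕ) →
      (n:ℝ) - m < Umap n k m c y i ∧ Umap n k m c y i < n := by
    intro i hi
    rw [hU_hi i hi]
    have h2 : ((i + (c : Fin (n*k+1))) : Fin (n*k+1)).val < c := by
      have := hval_hi i hi
      have := i.isLt
      omega
    have h3 := (hidx _).2 h2
    have h4 := hpos (i + (c : Fin (n*k+1)))
    constructor <;> linarith
  have hmono : StrictMono (Umap n k m c y) := by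
    intro i j hij
    have hij' : (i : ℕ) < (j : ℕ) := hij
    by_cases hi : (i : ℕ) < n*k+1 - c <;> by_cases hj : (j : ℕ) < n*k+1 - c
    · rw [hU_lo i hi, hU_lo j hj]
      have : y (i + (c : Fin (n*k+1))) < y (j + (c : Fin (n*k+1))) := by
        apply hys
        rw [Fin.lt_def, hval_lo i hi, hval_lo j hj]
        omega
      linarith
    · have h1 := (hB_lo i hi).2
      have h2 := (hB_hi j (by omega)).1
      linarith
    · omega
    · rw [hU_hi i (by omega), hU_hi j (by omega)]
      have : y (i + (c : Fin (n*k+1))) < y (j + (c : Fin (n*k+1))) := by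
        apply hys
        rw [Fin.lt_def, hval_hi i (by omega), hval_hi j (by omega)]
        have := i.isLt
        have := j.isLt
        omega
      linarith
  have hSm : Umap n k m c y ∈ Sset n k := by
    refine ⟨fun i j hij => hmono hij, fun i => ?_⟩
    have hnint : ∀ z : ℤ, Umap n k m c y i ≠ (z : ℝ) := by
      intro z hcon
      by_cases hi : (i : ℕ) < n*k+1 - c
      · rw [hU_lo i hi] at hcon
        apply hni (i + (c : Fin (n*k+1))) (z + m)
        push_cast
        linarith
      · rw [hU_hi i (by omega)] at hcon
        apply hni (i + (c : Fin (n*k+1))) (z + m - n)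
        push_cast
        linarith
    by_cases hi : (i : ℕ) < n*k+1 - c
    · have := hB_lo i hi
      exact ⟨this.1, by linarith [this.2, (Nat.cast_nonneg m : (0:ℝ) ≤ m)], hnint⟩
    · have := hB_hi i (by omega)
      exact ⟨by linarith [this.1], this.2, hnint⟩
  have hcnt : cntGT (Umap n k m c y) ((n:ℝ) - m) = c := by
    unfold cntGT
    have heq : (Finset.univ.filter fun i => (n:ℝ) - m < Umap n k m c y i)
        = Finset.univ.filter fun i : Fin (n*k+1) => n*k+1 - c ≤ (i : ℕ) := by
      apply Finset.filter_congr
      intro i _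
      by_cases hi : (i : ℕ) < n*k+1 - c
      · have := (hB_lo i hi).2
        constructor
        · intro hcon; exfalso; linarith
        · intro hcon; omega
      · have := (hB_hi i (by omega)).1
        constructor
        · intro _; omega
        · intro _; exact this
    rw [heq]
    exact card_val_ge hc'
  exact ⟨hSm, hcnt⟩

end TMap2

section Final

open MeasureTheory
open scoped ENNReal

variable {n k : ℕ} {m : ℕ}

def Wset (n k m : ℕ) : Set (Fin (n*k+1) → ℝ) := {x | x ∈ Sset n k ∧ CondC n k m x}

def Pc (n k m c : ℕ) : Set (Fin (n*k+1) → ℝ) := {x | x ∈ Sset n k ∧ cntGT x ((n:ℝ) - m) = c}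

def Qc (n k m c : ℕ) : Set (Fin (n*k+1) → ℝ) := {x | x ∈ Sset n k ∧ cnt x ((m:ℝ)) = c}

lemma Tmap_mp (m c : ℕ) : MeasurePreserving (Tmap n k m c) (volume) (volume) := by
  have h1 : Tmap n k m c = (fun z : Fin (n*k+1) → ℝ => z + vvec n m c)
      ∘ (fun x : Fin (n*k+1) → ℝ => fun i => x ((Equiv.subRight ((c : Fin (n*k+1)))) i)) := by
    funext x
    funext i
    rfl
  rw [h1]
  exact (measurePreserving_add_right volume _).comp (reindex_mp _)

lemma meas_cnt_set (t : ℝ) (c : ℕ) :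
    MeasurableSet {x : Fin (n*k+1) → ℝ | cnt x t = c} := by
  have he : {x : Fin (n*k+1) → ℝ | cnt x t = c}
      = {x : Fin (n*k+1) → ℝ | (Finset.univ.filter fun i => x i ∈ Set.Iio t).card = c} := by
    ext x
    simp [cnt, Set.mem_Iio]
  rw [he]
  exact meas_count _ measurableSet_Iio c

lemma meas_cntGT_set (t : ℝ) (c : ℕ) :
    MeasurableSet {x : Fin (n*k+1) → ℝ | cntGT x t = c} := by
  have he : {x : Fin (n*k+1) → ℝ | cntGT x t = c}
      = {x : Fin (n*k+1) → ℝ | (Finset.univ.filter fun i => x i ∈ Set.Ioi t).card = c} := by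
    ext x
    simp [cntGT, Set.mem_Ioi]
  rw [he]
  exact meas_count _ measurableSet_Ioi c

lemma meas_Qc (c : ℕ) : MeasurableSet (Qc n k m c) :=
  meas_Sset.inter (meas_cnt_set ((m:ℝ)) c)

lemma Pc_preimage (hn : 0 < n) (hm : m < n) (c : ℕ) :
    Pc n k m c = Tmap n k m c ⁻¹' (Qc n k m c) := by
  ext x
  constructor
  · rintro ⟨hxS, hcnt⟩
    obtain ⟨_, _, _, _, hS, hc⟩ := L1 hn hm hxS hcnt
    exact ⟨hS, hc⟩
  · rintro ⟨hyS, hycnt⟩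
    obtain ⟨hUS, hUcnt⟩ := L2 hn hm hyS hycnt
    have hTU := Tmap_Umap (n := n) (k := k) (m := m) c (Tmap n k m c x)
    have hx_eq : x = Umap n k m c (Tmap n k m c x) := Tmap_inj c hTU.symm
    rw [hx_eq]
    exact ⟨hUS, hUcnt⟩

lemma W_inter_Pc (hn : 0 < n) (hm : m < n) (c : ℕ) :
    Wset n k m ∩ Pc n k m c = Tmap n k m c ⁻¹' (Vset n k ∩ Qc n k m c) := by
  ext x
  constructor
  · rintro ⟨⟨hxS, hcond⟩, ⟨_, hcnt⟩⟩
    obtain ⟨hc', hw, hmono, hrange, hS, hq⟩ := L1 hn hm hxS hcnt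
    have hV : Tmap n k m c x ∈ Vset n k := by
      rw [mem_V_iff hn hS]
      intro t h1 h2
      rw [cnt_shift hn hm hxS hmono hrange h2]
      exact hcond t h1 h2
    exact ⟨hV, hS, hq⟩
  · rintro ⟨hV, hQ⟩
    have hxPc : x ∈ Pc n k m c := by
      rw [Pc_preimage hn hm c]
      exact hQ
    obtain ⟨hxS, hcnt⟩ := hxPc
    obtain ⟨hc', hw, hmono, hrange, hS, hq⟩ := L1 hn hm hxS hcnt
    have hcond : CondC n k m x := by
      intro t h1 h2
      have := (mem_V_iff hn hS).1 hV t h1 h2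
      rwa [cnt_shift hn hm hxS hmono hrange h2] at this
    exact ⟨⟨hxS, hcond⟩, hxS, hcnt⟩

lemma W_eq (hn : 0 < n) (hm : m < n) :
    Wset n k m = ⋃ c ∈ Finset.range (n*k+2),
      Tmap n k m c ⁻¹' (Vset n k ∩ Qc n k m c) := by
  have h1 : Wset n k m = ⋃ c ∈ Finset.range (n*k+2), Wset n k m ∩ Pc n k m c := by
    ext x
    simp only [Set.mem_iUnion, Finset.mem_range, Set.mem_inter_iff]
    constructor
    · intro hx
      refine ⟨cntGT x ((n:ℝ) - m), ?_, hx, hx.1, rfl⟩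
      have : cntGT x ((n:ℝ) - m) ≤ n*k+1 := by
        unfold cntGT
        calc (Finset.univ.filter fun i => (n:ℝ) - m < x i).card ≤ Finset.univ.card :=
              Finset.card_filter_le _ _
          _ = n*k+1 := by rw [Finset.card_univ, Fintype.card_fin]
      omega
    · rintro ⟨c, _, hx, _⟩
      exact hx
  rw [h1]
  apply Set.iUnion_congr
  intro c
  apply Set.iUnion_congr
  intro _
  exact W_inter_Pc hn hm c

lemma meas_W (hn : 0 < n) (hm : m < n) : MeasurableSet (Wset n k m) := by
  rw [W_eq hn hm]
  refine MeasurableSet.biUnion (Finset.range (n*k+2)).countable_toSet fun c _ => ?_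
  exact (meas_Vset.inter (meas_Qc c)).preimage (Tmap_mp m c).measurable

lemma vol_V_eq_sum : volume (Vset n k) =
    ∑ c ∈ Finset.range (n*k+2), volume (Vset n k ∩ Qc n k m c) := by
  have h1 : Vset n k = ⋃ c ∈ Finset.range (n*k+2), Vset n k ∩ Qc n k m c := by
    ext x
    simp only [Set.mem_iUnion, Finset.mem_range, Set.mem_inter_iff]
    constructor
    · intro hx
      refine ⟨cnt x ((m:ℝ)), ?_, hx, hx.1, rfl⟩
      have : cnt x ((m:ℝ)) ≤ n*k+1 := by
        unfold cnt
        calc (Finset.univ.filter fun i => x i < (m:ℝ)).card ≤ Finset.univ.card :=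
              Finset.card_filter_le _ _
          _ = n*k+1 := by rw [Finset.card_univ, Fintype.card_fin]
      omega
    · rintro ⟨c, _, hx, _⟩
      exact hx
  conv_lhs => rw [h1]
  apply measure_biUnion_finset
  · intro c _ c' _ hne
    refine Set.disjoint_left.2 fun x hx hx' => hne ?_
    rw [← hx.2.2, ← hx'.2.2]
  · intro c _
    exact meas_Vset.inter (meas_Qc c)

lemma vol_W_eq_V (hn : 0 < n) (hm : m < n) :
    volume (Wset n k m) = volume (Vset n k) := by
  rw [W_eq hn hm]
  rw [measure_biUnion_finset]
  · rw [vol_V_eq_sum (m := m)]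
    apply Finset.sum_congr rfl
    intro c _
    exact (Tmap_mp m c).measure_preimage (meas_Vset.inter (meas_Qc c)).nullMeasurableSet
  · intro c _ c' _ hne
    simp only [Function.onFun]
    rw [← W_inter_Pc hn hm c, ← W_inter_Pc hn hm c']
    refine Set.disjoint_left.2 fun x hx hx' => hne ?_
    rw [← hx.2.2, ← hx'.2.2]
  · intro c _
    exact (meas_Vset.inter (meas_Qc c)).preimage (Tmap_mp m c).measurable

lemma vol_S_eq_nV (hn : 0 < n) :
    volume (Sset n k) = (n : ℝ≥0∞) * volume (Vset n k) := by
  have hSu : Sset n k = ⋃ m ∈ Finset.range n, Wset n k m := by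
    ext x
    simp only [Set.mem_iUnion, Finset.mem_range]
    constructor
    · intro hx
      obtain ⟨m, ⟨hm, hY⟩, _⟩ := part1 hn hx
      exact ⟨m, hm, hx, (key_iff hn hm hx).1 hY⟩
    · rintro ⟨m, _, hx, _⟩
      exact hx
  rw [hSu, measure_biUnion_finset]
  · have : ∀ m ∈ Finset.range n, volume (Wset n k m) = volume (Vset n k) := by
      intro m hm
      exact vol_W_eq_V hn (Finset.mem_range.1 hm)
    rw [Finset.sum_congr rfl this, Finset.sum_const, Finset.card_range, nsmul_eq_mul]
  · intro m1 hm1 m2 hm2 hne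
    rw [Finset.mem_coe, Finset.mem_range] at hm1 hm2
    refine Set.disjoint_left.2 fun x hx hx' => hne ?_
    obtain ⟨mu, _, huniq⟩ := part1 hn hx.1
    have e1 : m1 = mu := huniq m1 ⟨hm1, (key_iff hn hm1 hx.1).2 hx.2⟩
    have e2 : m2 = mu := huniq m2 ⟨hm2, (key_iff hn hm2 hx'.1).2 hx'.2⟩
    rw [e1, e2]
  · intro m hm
    exact meas_W hn (Finset.mem_range.1 hm)

lemma vol_V_final (hn : 0 < n) :
    volume (Vset n k) = ENNReal.ofReal ((n : ℝ) ^ (n * k) / (Nat.factorial (n * k + 1) : ℝ)) := by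
  have h1 := vol_Sreg_mul (n := n) (N := n*k+1)
  rw [← vol_Sset_eq_Sreg (k := k), vol_S_eq_nV hn] at h1
  set A : ℝ≥0∞ := (Nat.factorial (n*k+1) : ℝ≥0∞) * (n : ℝ≥0∞) with hA
  have hA0 : A ≠ 0 := by
    rw [hA]
    apply mul_ne_zero
    · exact_mod_cast Nat.factorial_ne_zero (n*k+1)
    · exact_mod_cast hn.ne'
  have hAt : A ≠ ⊤ := by
    rw [hA]
    exact ENNReal.mul_ne_top (ENNReal.natCast_ne_top _) (ENNReal.natCast_ne_top _)
  have hL : A * volume (Vset n k) = (ENNReal.ofReal n)^(n*k+1) := by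
    rw [hA, mul_assoc]
    exact h1
  have hR : A * ENNReal.ofReal ((n : ℝ) ^ (n * k) / (Nat.factorial (n * k + 1) : ℝ))
      = (ENNReal.ofReal n)^(n*k+1) := by
    have hfac : (0:ℝ) < Nat.factorial (n*k+1) := by
      exact_mod_cast Nat.factorial_pos (n*k+1)
    have hcast : A = ENNReal.ofReal ((Nat.factorial (n*k+1) : ℝ) * n) := by
      rw [ENNReal.ofReal_mul hfac.le]
      simp [hA]
    rw [hcast, ← ENNReal.ofReal_mul (by positivity), ← ENNReal.ofReal_pow (Nat.cast_nonneg n)]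
    congr 1
    field_simp
    ring
  rw [← hR] at hL
  exact (ENNReal.mul_right_inj hA0 hAt).1 hL

end Final

end Aux15

theorem stmt15 (n k : ℕ) (hn : 0 < n) (hk : 0 < k) :
    (∀ᵐ x : Fin (n * k + 1) → ℝ ∂volume, x ∈ Sset n k →
      ∃! m : ℕ, m < n ∧ ∀ y : Fin (n * k + 1) → ℝ,
        (∀ i j : Fin (n * k + 1), i < j → y i < y j) →
        Set.range y = (fun t => realMod t n) '' Set.range (fun i => x i + m) →
        y ∈ Vset n k) ∧
    volume (Vset n k) = ENNReal.ofReal ((n : ℝ) ^ (n * k) / ((n * k + 1)! : ℝ)) := by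
  constructor
  · exact MeasureTheory.ae_of_all _ fun x hx => Aux15.part1 hn hx
  · exact Aux15.vol_V_final hn
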